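/- Let k be a field of characteristic 2, G = C2 × C2 = ⟨g⟩ × ⟨h⟩, and let w be the 2-dimensional kG-module on which g acts trivially and h acts by the regular representation of C2. Let Ω(k) denote the augmentation ideal of kG (the kernel of the augmentation map kG → k), a 3-dimensional kG-module. Then Hom_w(Ω(k), k) ≠ 0; that is, there exists a kG-homomorphism Ω(k) → k which does not factor through any w-projective module. -/

import Mathlib

open CategoryTheory MonoidalCategory Limits

/-- `X` is `w`-projective: `X` is a direct summand of `w ⊗ Y` (diagonal `G`-action)
for some `kG`-module `Y`. -/
def IsRelProjective {k G : Type} [Field k] [Group G] (w X : Rep k G) : Prop :=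
  ∃ (Y : Rep k G) (i : X ⟶ w ⊗ Y) (r : w ⊗ Y ⟶ X), i ≫ r = 𝟙 X

/-- `f` factors through some `w`-projective module. -/
def FactorsThroughRelProj {k G : Type} [Field k] [Group G] (w : Rep k G)
    {X Y : Rep k G} (f : X ⟶ Y) : Prop :=
  ∃ (Z : Rep k G) (g : X ⟶ Z) (h : Z ⟶ Y), IsRelProjective w Z ∧ g ≫ h = f

/-- The cyclic group of order 2. -/
abbrev CycTwo : Type := Multiplicative (ZMod 2)

/-- The Klein four group `G = C2 × C2 = ⟨g⟩ × ⟨h⟩`. -/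
abbrev KleinFour : Type := CycTwo × CycTwo

/-- The 2-dimensional `kG`-module `k[C2]` on which the first factor `⟨g⟩` of the Klein
four group acts trivially and the second factor `⟨h⟩` acts by the regular
representation of `C2`; i.e. `w ≅ Ind_{⟨g⟩×1}^G (k)`. -/
noncomputable def wKlein (k : Type) [Field k] : Rep k KleinFour :=
  Rep.of ((Representation.ofMulAction k CycTwo CycTwo).comp (MonoidHom.snd CycTwo CycTwo))

/-- The regular module `kG` (the group algebra with the left regular action). -/
noncomputable def regRep (k G : Type) [Field k] [Group G] : Rep k G :=
  Rep.of (Representation.ofMulAction k G G)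

/-- The augmentation map `kG → k`, sending each group element to `1`, as a morphism
of representations. -/
noncomputable def augmentation (k G : Type) [Field k] [Group G] :
    regRep k G ⟶ Rep.trivial k G k := Rep.ofHom
  { toLinearMap := Finsupp.linearCombination k (fun _ => (1 : k)) ∘ₗ
      (MonoidAlgebra.coeffLinearEquiv k).toLinearMap
    isIntertwining' := fun g => by
      refine MonoidAlgebra.lhom_ext' fun a => LinearMap.ext fun b => ?_
      simp [MonoidAlgebra.lsingle_apply, Representation.ofMulAction_single] }

/-- `Ω(k)`: the augmentation ideal of `kG`, the kernel of the augmentation `kG → k`. -/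
noncomputable def augIdeal (k G : Type) [Field k] [Group G] : Rep k G :=
  kernel (augmentation k G)

/-! ### Auxiliary material -/

open TensorProduct in
theorem aux_true : True := trivial

section Aux

/-- For a representation of a commutative group, the action maps commute. -/
theorem auxRhoComm {k G : Type} [Field k] [CommGroup G] (A : Rep k G) (σ τ : G) (x : A) :
    A.ρ σ (A.ρ τ x) = A.ρ τ (A.ρ σ x) := by
  have h1 : A.ρ σ * A.ρ τ = A.ρ τ * A.ρ σ := by
    rw [← map_mul, ← map_mul, mul_comm]
  calc A.ρ σ (A.ρ τ x) = (A.ρ σ * A.ρ τ) x := rfl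
    _ = (A.ρ τ * A.ρ σ) x := by rw [h1]
    _ = A.ρ τ (A.ρ σ x) := rfl

/-- `ρ(σ) - 1` as a morphism of representations (for a commutative group). -/
noncomputable def auxTheta {k G : Type} [Field k] [CommGroup G] (A : Rep k G) (σ : G) :
    A ⟶ A := by
  refine ConcreteCategory.ofHom (C := Rep k G) ⟨(A.ρ σ - LinearMap.id : A →ₗ[k] A), ?_⟩
  intro τ
  ext x
  show (A.ρ σ - LinearMap.id : A →ₗ[k] A) (A.ρ (τ : G) x)
      = A.ρ (τ : G) ((A.ρ σ - LinearMap.id : A →ₗ[k] A) x)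
  simp only [LinearMap.sub_apply, LinearMap.id_apply, map_sub]
  rw [auxRhoComm]

theorem auxTheta_hom_apply {k G : Type} [Field k] [CommGroup G] (A : Rep k G) (σ : G) (x : A) :
    (auxTheta A σ).hom x = A.ρ σ x - x := rfl

theorem auxTheta_natural {k G : Type} [Field k] [CommGroup G] {A B : Rep k G} (φ : A ⟶ B)
    (σ : G) : auxTheta A σ ≫ φ = φ ≫ auxTheta B σ := by
  ext x
  show φ.hom ((auxTheta A σ).hom x) = (auxTheta B σ).hom (φ.hom x)
  rw [auxTheta_hom_apply, auxTheta_hom_apply, map_sub, Rep.hom_comm_apply]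

theorem auxTheta_comm {k G : Type} [Field k] [CommGroup G] (A : Rep k G) (σ τ : G) :
    auxTheta A σ ≫ auxTheta A τ = auxTheta A τ ≫ auxTheta A σ := by
  ext x
  show (auxTheta A τ).hom ((auxTheta A σ).hom x) = (auxTheta A σ).hom ((auxTheta A τ).hom x)
  rw [auxTheta_hom_apply, auxTheta_hom_apply, auxTheta_hom_apply, auxTheta_hom_apply,
    map_sub, map_sub, auxRhoComm]
  module

/-- First generator of the Klein four group. -/
abbrev genG : KleinFour := (Multiplicative.ofAdd 1, 1)

/-- Second generator of the Klein four group. -/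
abbrev genH : KleinFour := (1, Multiplicative.ofAdd 1)

theorem cyc_cases (c : CycTwo) : c = 1 ∨ c = Multiplicative.ofAdd 1 := by revert c; decide

/-- The linear functional picking out the sum of coefficients at group elements whose
first component is the generator. -/
noncomputable def Ffun (k : Type) [Field k] : MonoidAlgebra k KleinFour →ₗ[k] k :=
  Finsupp.linearCombination k
    (fun σ : KleinFour => if σ.1 = Multiplicative.ofAdd 1 then (1:k) else 0) ∘ₗ
      (MonoidAlgebra.coeffLinearEquiv k).toLinearMap

/-- The augmentation as a bare linear map. -/
noncomputable def augFun (k : Type) [Field k] : MonoidAlgebra k KleinFour →ₗ[k] k :=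
  Finsupp.linearCombination k (fun _ => (1:k)) ∘ₗ
      (MonoidAlgebra.coeffLinearEquiv k).toLinearMap

theorem Ffun_single (k : Type) [Field k] (σ : KleinFour) (a : k) :
    Ffun k (MonoidAlgebra.single σ a) = if σ.1 = Multiplicative.ofAdd 1 then a else 0 := by
  simp [Ffun, Finsupp.linearCombination_single]

theorem Ffun_comm (k : Type) [Field k] [CharP k 2] (σ : KleinFour) (z : MonoidAlgebra k KleinFour) :
    Ffun k ((Representation.ofMulAction k KleinFour KleinFour) σ z)
      = Ffun k z + (if σ.1 = 1 then 0 else augFun k z) := by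
  induction z using MonoidAlgebra.induction_linear with
  | zero => simp
  | add f g hf hg => simp only [map_add, hf, hg]; split <;> ring
  | single τ a =>
    rw [Representation.ofMulAction_single, smul_eq_mul, Ffun_single, Ffun_single]
    have haug : augFun k (MonoidAlgebra.single τ a) = a := by simp [augFun]
    rw [haug]
    show (if σ.1 * τ.1 = Multiplicative.ofAdd 1 then a else 0) = _
    have e1 : ¬(1 : CycTwo) = Multiplicative.ofAdd 1 := by decide
    have e2 : (Multiplicative.ofAdd 1 : CycTwo) * Multiplicative.ofAdd 1 = 1 := by decide
    rcases cyc_cases σ.1 with h1 | h1 <;> rcases cyc_cases τ.1 with h2 | h2 <;>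
        rw [h1, h2]
    · simp [e1]
    · simp [e1]
    · simp [e1, mul_one]
    · rw [e2]
      simp [e1, show ¬(Multiplicative.ofAdd 1 : CycTwo) = 1 from by decide]
      exact (CharTwo.add_self_eq_zero a).symm

theorem augFun_comm (k : Type) [Field k] (σ : KleinFour) (z : MonoidAlgebra k KleinFour) :
    augFun k ((Representation.ofMulAction k KleinFour KleinFour) σ z) = augFun k z := by
  induction z using MonoidAlgebra.induction_linear with
  | zero => simp
  | add f g hf hg => simp only [map_add, hf, hg]
  | single τ a => rw [Representation.ofMulAction_single]; simp [augFun]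

theorem aug_ker_apply (k : Type) [Field k] (x : augIdeal k KleinFour) :
    augFun k ((CategoryTheory.Limits.kernel.ι (augmentation k KleinFour)).hom x) = 0 := by
  have h2 := congrArg (fun φ : augIdeal k KleinFour ⟶ Rep.trivial k KleinFour k
      => φ.hom x) (kernel.condition (augmentation k KleinFour))
  simp only [Rep.hom_comp, Rep.zero_hom] at h2
  exact h2

/-- The distinguished morphism `Ω(k) → k` of representations. -/
noncomputable def fAug (k : Type) [Field k] [CharP k 2] :
    augIdeal k KleinFour ⟶ Rep.trivial k KleinFour k := by
  refine ConcreteCategory.ofHom (C := Rep k KleinFour)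
    ⟨Ffun k ∘ₗ (CategoryTheory.Limits.kernel.ι (augmentation k KleinFour)).hom.toLinearMap, ?_⟩
  intro σ
  ext x
  show Ffun k ((kernel.ι (augmentation k KleinFour)).hom
        ((augIdeal k KleinFour).ρ (σ : KleinFour) x))
      = (Rep.trivial k KleinFour k).ρ (σ : KleinFour)
          (Ffun k ((kernel.ι (augmentation k KleinFour)).hom x))
  have step1 : (kernel.ι (augmentation k KleinFour)).hom
        ((augIdeal k KleinFour).ρ (σ : KleinFour) x)
      = (Representation.ofMulAction k KleinFour KleinFour) (σ : KleinFour)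
        ((kernel.ι (augmentation k KleinFour)).hom x) :=
    Rep.hom_comm_apply (kernel.ι (augmentation k KleinFour)) (σ : KleinFour) x
  erw [step1, Ffun_comm, aug_ker_apply, Rep.trivial_ρ_apply]
  split <;> simp

theorem fAug_apply (k : Type) [Field k] [CharP k 2] (x : augIdeal k KleinFour) :
    (fAug k).hom x = Ffun k ((CategoryTheory.Limits.kernel.ι (augmentation k KleinFour)).hom x) :=
  rfl

/-- A reducible copy of `wKlein`. -/
noncomputable abbrev wK (k : Type) [Field k] : Rep k KleinFour :=
  Rep.of ((Representation.ofMulAction k CycTwo CycTwo).comp (MonoidHom.snd CycTwo CycTwo))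

theorem wKlein_rho_single (k : Type) [Field k] (σ : KleinFour) (c : CycTwo) (a : k) :
    (wK k).ρ σ (MonoidAlgebra.single c a) = MonoidAlgebra.single (σ.2 * c) a := by
  show (Representation.ofMulAction k CycTwo CycTwo) (σ.2) (MonoidAlgebra.single c a) = _
  rw [Representation.ofMulAction_single, smul_eq_mul]

open TensorProduct in
theorem wtensor_induction {k : Type} [Field k] {N : Type} [AddCommGroup N] [Module k N]
    {Q : ((MonoidAlgebra k CycTwo) ⊗[k] N) → Prop}
    (h0 : ∀ y : N, Q (MonoidAlgebra.single 1 1 ⊗ₜ y))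
    (h1 : ∀ y : N, Q (MonoidAlgebra.single (Multiplicative.ofAdd 1) 1 ⊗ₜ y))
    (hadd : ∀ m m', Q m → Q m' → Q (m + m')) (m : (MonoidAlgebra k CycTwo) ⊗[k] N) : Q m := by
  induction m using TensorProduct.induction_on with
  | zero =>
    have := h0 0
    rwa [TensorProduct.tmul_zero] at this
  | tmul s y =>
    have hs : s = s.coeff 1 • MonoidAlgebra.single (1 : CycTwo) (1:k)
        + s.coeff (Multiplicative.ofAdd 1) • MonoidAlgebra.single (Multiplicative.ofAdd 1) (1:k) := by
      ext c
      rcases cyc_cases c with h | h <;> subst h <;>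
        simp [MonoidAlgebra.coeff_add, MonoidAlgebra.coeff_smul, Finsupp.single_apply, show ¬(1:CycTwo) = Multiplicative.ofAdd 1 from by decide,
          show ¬(Multiplicative.ofAdd 1:CycTwo) = 1 from by decide]
    rw [hs, TensorProduct.add_tmul, TensorProduct.smul_tmul, TensorProduct.smul_tmul]
    exact hadd _ _ (h0 _) (h1 _)
  | add m m' hm hm' => exact hadd _ _ hm hm'

end Aux

section TensorAux

open TensorProduct

variable {k : Type} [Field k] (Y : Rep k KleinFour)
  (b : wK k ⊗ Y ⟶ Rep.trivial k KleinFour k)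

/-- Projection onto the coefficient of `c` in the first tensor factor. -/
noncomputable def auxP (c : CycTwo) : ((MonoidAlgebra k CycTwo) ⊗[k] Y) →ₗ[k] Y :=
  (TensorProduct.lid k Y).toLinearMap ∘ₗ LinearMap.rTensor Y (Finsupp.lapply c ∘ₗ (MonoidAlgebra.coeffLinearEquiv k).toLinearMap)

theorem auxP_tmul (c : CycTwo) (s : MonoidAlgebra k CycTwo) (y : Y) :
    auxP Y c (s ⊗ₜ y) = s.coeff c • y := by simp [auxP]

/-- `y ↦ b(e₀ ⊗ y)`. -/
noncomputable def auxBeta : Y →ₗ[k] k :=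
  LinearMap.comp (b.hom.toLinearMap : ((MonoidAlgebra k CycTwo) ⊗[k] Y) →ₗ[k] k)
    (TensorProduct.mk k (MonoidAlgebra k CycTwo) Y (MonoidAlgebra.single 1 1))

theorem auxBeta_apply (y : Y) :
    auxBeta Y b y = b.hom ((MonoidAlgebra.single (1 : CycTwo) (1:k)) ⊗ₜ[k] y) := rfl

theorem aux_bEquiv (σ : KleinFour) (m : (MonoidAlgebra k CycTwo) ⊗[k] Y) :
    b.hom ((wK k ⊗ Y).ρ σ m) = b.hom m :=
  (Rep.hom_comm_apply b σ m).trans (Rep.trivial_ρ_apply σ _)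

theorem aux_rho_tmul (σ : KleinFour) (s : MonoidAlgebra k CycTwo) (y : Y) :
    (wK k ⊗ Y).ρ σ (s ⊗ₜ y) = ((wK k).ρ σ s) ⊗ₜ[k] (Y.ρ σ y) := by
  show (TensorProduct.map ((wK k).ρ σ) (Y.ρ σ)) (s ⊗ₜ y) = _
  rw [TensorProduct.map_tmul]

theorem keyL1 (m : (MonoidAlgebra k CycTwo) ⊗[k] Y) :
    b.hom m = auxBeta Y b (auxP Y 1 m)
      + auxBeta Y b (Y.ρ genH (auxP Y (Multiplicative.ofAdd 1) m)) := by
  have hne : ¬(1 : CycTwo) = Multiplicative.ofAdd 1 := by decide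
  have hne' : ¬(Multiplicative.ofAdd 1 : CycTwo) = 1 := by decide
  induction m using wtensor_induction with
  | h0 y =>
    rw [auxP_tmul, auxP_tmul]
    simp [MonoidAlgebra.coeff_single, Finsupp.single_apply, hne, auxBeta_apply]
  | h1 y =>
    rw [auxP_tmul, auxP_tmul]
    have hb1 : b.hom ((MonoidAlgebra.single (Multiplicative.ofAdd 1 : CycTwo) (1:k)) ⊗ₜ[k] y)
        = auxBeta Y b (Y.ρ genH y) := by
      rw [auxBeta_apply]
      have h2 := aux_bEquiv Y b genH
        ((MonoidAlgebra.single (Multiplicative.ofAdd 1 : CycTwo) (1:k)) ⊗ₜ[k] y)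
      rw [aux_rho_tmul, wKlein_rho_single,
        show (genH.2 * Multiplicative.ofAdd 1 : CycTwo) = 1 from by decide] at h2
      exact h2.symm
    rw [hb1]
    simp [MonoidAlgebra.coeff_single, Finsupp.single_apply, hne, hne']
  | hadd m m' hm hm' =>
    simp only [map_add, hm, hm']
    abel

theorem keyL2 (m : (MonoidAlgebra k CycTwo) ⊗[k] Y) :
    auxP Y 1 ((wK k ⊗ Y).ρ genH m)
      = Y.ρ genH (auxP Y (Multiplicative.ofAdd 1) m) := by
  have hne : ¬(1 : CycTwo) = Multiplicative.ofAdd 1 := by decide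
  have hne' : ¬(Multiplicative.ofAdd 1 : CycTwo) = 1 := by decide
  induction m using wtensor_induction with
  | h0 y =>
    rw [aux_rho_tmul, wKlein_rho_single, auxP_tmul, auxP_tmul,
      show (genH.2 * 1 : CycTwo) = Multiplicative.ofAdd 1 from by decide]
    simp [MonoidAlgebra.coeff_single, Finsupp.single_apply, hne, hne']
  | h1 y =>
    rw [aux_rho_tmul, wKlein_rho_single, auxP_tmul, auxP_tmul,
      show (genH.2 * Multiplicative.ofAdd 1 : CycTwo) = 1 from by decide]
    simp [MonoidAlgebra.coeff_single, Finsupp.single_apply]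
  | hadd m m' hm hm' => simp only [map_add, hm, hm']

theorem keyL3 (m : (MonoidAlgebra k CycTwo) ⊗[k] Y) :
    auxP Y 1 ((wK k ⊗ Y).ρ genG m) = Y.ρ genG (auxP Y 1 m) := by
  have hne : ¬(Multiplicative.ofAdd 1 : CycTwo) = 1 := by decide
  induction m using wtensor_induction with
  | h0 y =>
    rw [aux_rho_tmul, wKlein_rho_single, show (genG.2 * 1 : CycTwo) = 1 from by decide,
      auxP_tmul, auxP_tmul]
    simp [MonoidAlgebra.coeff_single, Finsupp.single_apply]
  | h1 y =>
    rw [aux_rho_tmul, wKlein_rho_single,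
      show (genG.2 * Multiplicative.ofAdd 1 : CycTwo) = Multiplicative.ofAdd 1 from by decide,
      auxP_tmul, auxP_tmul]
    simp [MonoidAlgebra.coeff_single, Finsupp.single_apply, hne]
  | hadd m m' hm hm' => simp only [map_add, hm, hm']

theorem keyL4 (y : Y) : auxBeta Y b (Y.ρ genG y) = auxBeta Y b y := by
  rw [auxBeta_apply, auxBeta_apply]
  have h2 := aux_bEquiv Y b genG ((MonoidAlgebra.single (1 : CycTwo) (1:k)) ⊗ₜ[k] y)
  rw [aux_rho_tmul, wKlein_rho_single,
    show (genG.2 * 1 : CycTwo) = 1 from by decide] at h2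
  exact h2

end TensorAux

/-- Over the Klein four group in characteristic 2, with `w = Ind_{⟨g⟩×1}^G(k)`,
`Hom_w(Ω(k), k) ≠ 0`: there is a `kG`-homomorphism `Ω(k) → k` that does not factor
through any `w`-projective module. -/
theorem homW_omega_trivial_ne_zero (k : Type) [Field k] [CharP k 2] :
    ∃ f : augIdeal k KleinFour ⟶ Rep.trivial k KleinFour k,
      ¬ FactorsThroughRelProj (wKlein k) f := by
  classical
  refine ⟨fAug k, ?_⟩
  rintro ⟨Z, g', h', ⟨Y, i, r, hir⟩, hfac⟩
  set a : augIdeal k KleinFour ⟶ wK k ⊗ Y := g' ≫ i with ha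
  set b : wK k ⊗ Y ⟶ Rep.trivial k KleinFour k := r ≫ h' with hb
  have hab : a ≫ b = fAug k := by
    have e : (g' ≫ i) ≫ (r ≫ h') = fAug k := by
      rw [Category.assoc, ← Category.assoc i r h', hir, Category.id_comp, hfac]
    exact e
  -- the lifts of ρ(σ) - 1 through the kernel
  have hcond : ∀ σ : KleinFour,
      auxTheta (regRep k KleinFour) σ ≫ augmentation k KleinFour = 0 := by
    intro σ
    ext z
    show (augmentation k KleinFour).hom ((auxTheta (regRep k KleinFour) σ).hom z)
        = (0 : regRep k KleinFour ⟶ Rep.trivial k KleinFour k).hom z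
    rw [auxTheta_hom_apply, map_sub, Rep.zero_hom]
    have h1 : (augmentation k KleinFour).hom ((regRep k KleinFour).ρ σ z)
        = (augmentation k KleinFour).hom z := augFun_comm k σ z
    rw [h1, sub_self]
    rfl
  set ι := kernel.ι (augmentation k KleinFour) with hι
  set ℓg := kernel.lift (augmentation k KleinFour)
    (auxTheta (regRep k KleinFour) genG) (hcond genG) with hℓg
  set ℓh := kernel.lift (augmentation k KleinFour)
    (auxTheta (regRep k KleinFour) genH) (hcond genH) with hℓh
  set one : regRep k KleinFour := MonoidAlgebra.single (1 : KleinFour) (1 : k) with hone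
  set x₀ : augIdeal k KleinFour := ℓg.hom one with hx₀
  set x₁ : augIdeal k KleinFour := ℓh.hom one with hx₁
  set x₂ : augIdeal k KleinFour := (augIdeal k KleinFour).ρ genG x₁ - x₁ with hx₂
  -- the image of x₀ in the group algebra
  have hlift : ∀ (σ : KleinFour) (hσ : _) (z : regRep k KleinFour),
      ι.hom ((kernel.lift (augmentation k KleinFour)
          (auxTheta (regRep k KleinFour) σ) hσ).hom z)
        = (regRep k KleinFour).ρ σ z - z := by
    intro σ hσ z
    have h1 := congrArg (fun φ : regRep k KleinFour ⟶ regRep k KleinFour => φ.hom z)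
      (kernel.lift_ι (augmentation k KleinFour) (auxTheta (regRep k KleinFour) σ) hσ)
    simp only [Rep.hom_comp] at h1
    exact h1
  have hρone : ∀ σ : KleinFour, (regRep k KleinFour).ρ σ one = MonoidAlgebra.single σ (1:k) := by
    intro σ
    show (Representation.ofMulAction k KleinFour KleinFour) σ (MonoidAlgebra.single 1 1) = _
    rw [Representation.ofMulAction_single, smul_eq_mul, mul_one]
  have hι₀ : ι.hom x₀ = MonoidAlgebra.single genG (1:k) - MonoidAlgebra.single (1 : KleinFour) (1:k) := by
    rw [hx₀, hℓg, hlift genG (hcond genG) one, hρone genG]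
    rfl
  -- the relation ρ(h)x₀ - x₀ = x₂
  have hmor : ℓg ≫ auxTheta (kernel (augmentation k KleinFour)) genH
      = ℓh ≫ auxTheta (kernel (augmentation k KleinFour)) genG := by
    apply (cancel_mono ι).1
    rw [hℓg, hℓh, hι]
    simp only [Category.assoc]
    rw [auxTheta_natural (A := kernel (augmentation k KleinFour)) (kernel.ι (augmentation k KleinFour)) genH,
      auxTheta_natural (A := kernel (augmentation k KleinFour)) (kernel.ι (augmentation k KleinFour)) genG,
      ← Category.assoc, ← Category.assoc, kernel.lift_ι, kernel.lift_ι, auxTheta_comm]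
  have hR : (augIdeal k KleinFour).ρ genH x₀ - x₀ = x₂ := by
    have h1 := congrArg
      (fun φ : regRep k KleinFour ⟶ kernel (augmentation k KleinFour) => φ.hom one) hmor
    simp only [Rep.hom_comp] at h1
    have h2 : (auxTheta (augIdeal k KleinFour) genH).hom (ℓg.hom one)
        = (auxTheta (augIdeal k KleinFour) genG).hom (ℓh.hom one) := h1
    erw [auxTheta_hom_apply, auxTheta_hom_apply] at h2
    rw [hx₀, hx₂, hx₁]
    exact h2
  -- transport everything through a
  have hE1 : auxP Y 1 (a.hom x₂)
      = Y.ρ genG (auxP Y 1 (a.hom x₁)) - auxP Y 1 (a.hom x₁) := by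
    rw [hx₂, map_sub, map_sub, Rep.hom_comm_apply, keyL3]
  have hE2 : auxP Y 1 (a.hom x₂)
      = Y.ρ genH (auxP Y (Multiplicative.ofAdd 1) (a.hom x₀)) - auxP Y 1 (a.hom x₀) := by
    rw [← hR, map_sub, map_sub, Rep.hom_comm_apply, keyL2]
  have h3 : auxBeta Y b (auxP Y 1 (a.hom x₂)) = 0 := by
    rw [hE1, map_sub, keyL4, sub_self]
  have h2 : auxBeta Y b (auxP Y 1 (a.hom x₂))
      = auxBeta Y b (Y.ρ genH (auxP Y (Multiplicative.ofAdd 1) (a.hom x₀)))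
        - auxBeta Y b (auxP Y 1 (a.hom x₀)) := by
    rw [hE2, map_sub]
  have hkey : b.hom (a.hom x₀) = (0 : k) := by
    show (b.hom (a.hom x₀) : k) = (0 : k)
    rw [keyL1 Y b (a.hom x₀)]
    rw [h2] at h3
    rw [sub_eq_zero.mp h3]
    exact CharTwo.add_self_eq_zero (R := k) _
  -- but f(x₀) = 1
  have hfx : (fAug k).hom x₀ = (1 : k) := by
    show Ffun k (ι.hom x₀) = (1 : k)
    rw [hι₀, map_sub, Ffun_single, Ffun_single]
    norm_num [show ¬((1:CycTwo) = Multiplicative.ofAdd 1) from by decide]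
  have hba : b.hom (a.hom x₀) = (fAug k).hom x₀ := by
    have h1 := congrArg
      (fun φ : augIdeal k KleinFour ⟶ Rep.trivial k KleinFour k => φ.hom x₀) hab
    simp only [Rep.hom_comp] at h1
    exact h1
  exact zero_ne_one (α := k) (hkey.symm.trans (hba.trans hfx))
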